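/- For every integer n ≥ 2, φ is strictly concave on the interval [0,1]. -/

import Mathlib

noncomputable section

open Real Set

private lemma const_mul_strictConcave {s : Set ℝ} {f : ℝ → ℝ}
    (h : StrictConcaveOn ℝ s f) {c : ℝ} (hc : 0 < c) :
    StrictConcaveOn ℝ s (fun x => c * f x) := by
  refine ⟨h.1, fun x hx y hy hxy a b ha hb hab => ?_⟩
  have := h.2 hx hy hxy ha hb hab
  simp only [smul_eq_mul] at *
  nlinarith

private lemma psi_strictConcave {p : ℝ} (hp0 : 0 < p) (hp1 : p < 1) :
    StrictConcaveOn ℝ (Icc (0:ℝ) 1) (fun x : ℝ => x ^ p * (1 - x) ^ (1 - p)) := by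
  set f : ℝ → ℝ := fun x => x ^ p * (1 - x) ^ (1 - p) with hf
  set g : ℝ → ℝ := fun x =>
    p * x ^ (p - 1) * (1 - x) ^ (1 - p) - (1 - p) * (x ^ p * (1 - x) ^ (-p)) with hg
  have hderiv : ∀ x ∈ Ioo (0:ℝ) 1, HasDerivAt f (g x) x := by
    intro x hx
    have hx0 : x ≠ 0 := ne_of_gt hx.1
    have hx1 : (1 : ℝ) - x ≠ 0 := by have := hx.2; intro h; linarith [sub_eq_zero.mp h]
    have h1 : HasDerivAt (fun y : ℝ => y ^ p) (1 * p * x ^ (p - 1)) x :=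
      (hasDerivAt_id x).rpow_const (Or.inl hx0)
    have h2 : HasDerivAt (fun y : ℝ => (1 - y) ^ (1 - p))
        ((0 - 1) * (1 - p) * (1 - x) ^ (1 - p - 1)) x :=
      ((hasDerivAt_const x (1:ℝ)).sub (hasDerivAt_id x)).rpow_const (Or.inl hx1)
    have := h1.mul h2
    convert this using 1
    · rfl
    · rfl
    · rfl
    have e : (1:ℝ) - p - 1 = -p := by ring
    rw [hg, e]
    ring
  set G : ℝ → ℝ := fun x =>
    p * (p - 1) * x ^ (p - 2) * (1 - x) ^ (1 - p)
      - 2 * (p * (1 - p) * x ^ (p - 1) * (1 - x) ^ (-p))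
      - p * (1 - p) * (x ^ p * (1 - x) ^ (-p - 1)) with hG
  have hderiv2 : ∀ x ∈ Ioo (0:ℝ) 1, HasDerivAt g (G x) x := by
    intro x hx
    have hx0 : x ≠ 0 := ne_of_gt hx.1
    have hx1 : (1 : ℝ) - x ≠ 0 := by have := hx.2; intro h; linarith [sub_eq_zero.mp h]
    have h1 : HasDerivAt (fun y : ℝ => y ^ (p - 1)) (1 * (p - 1) * x ^ (p - 1 - 1)) x :=
      (hasDerivAt_id x).rpow_const (Or.inl hx0)
    have h2 : HasDerivAt (fun y : ℝ => (1 - y) ^ (1 - p))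
        ((0 - 1) * (1 - p) * (1 - x) ^ (1 - p - 1)) x :=
      ((hasDerivAt_const x (1:ℝ)).sub (hasDerivAt_id x)).rpow_const (Or.inl hx1)
    have h3 : HasDerivAt (fun y : ℝ => y ^ p) (1 * p * x ^ (p - 1)) x :=
      (hasDerivAt_id x).rpow_const (Or.inl hx0)
    have h4 : HasDerivAt (fun y : ℝ => (1 - y) ^ (-p))
        ((0 - 1) * (-p) * (1 - x) ^ (-p - 1)) x :=
      ((hasDerivAt_const x (1:ℝ)).sub (hasDerivAt_id x)).rpow_const (Or.inl hx1)
    have hA := ((h1.mul h2).const_mul p).sub ((h3.mul h4).const_mul (1 - p))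
    have e1 : p - 1 - 1 = p - 2 := by ring
    have e2 : (1:ℝ) - p - 1 = -p := by ring
    convert hA using 1
    · rfl
    · rfl
    · funext y; rw [hg]; simp only [Pi.sub_apply, Pi.mul_apply]; ring
    · simp only [hG]; rw [e1, e2]; ring
  have hcont : ContinuousOn f (Icc (0:ℝ) 1) := by
    apply ContinuousOn.mul
    · exact continuousOn_id.rpow_const fun x _ => Or.inr hp0.le
    · exact (continuousOn_const.sub continuousOn_id).rpow_const fun x _ => Or.inr (by linarith)
  apply strictConcaveOn_of_deriv2_neg (convex_Icc 0 1) hcont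
  intro x hx
  rw [interior_Icc] at hx
  have hev : deriv f =ᶠ[nhds x] g := by
    filter_upwards [Ioo_mem_nhds hx.1 hx.2] with y hy
    exact (hderiv y hy).deriv
  have h2 : deriv (deriv f) x = G x := by
    rw [hev.deriv_eq]
    exact (hderiv2 x hx).deriv
  have hiter : deriv^[2] f x = deriv (deriv f) x := by
    simp [Function.iterate_succ, Function.comp]
  rw [hiter, h2]
  simp only [hG]
  have h1p : (0:ℝ) < 1 - p := by linarith
  have ha1 : (0:ℝ) < x ^ (p - 2) := rpow_pos_of_pos hx.1 _
  have ha2 : (0:ℝ) < (1 - x) ^ (1 - p) := rpow_pos_of_pos (by linarith [hx.2]) _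
  have ha3 : (0:ℝ) < x ^ (p - 1) := rpow_pos_of_pos hx.1 _
  have ha4 : (0:ℝ) < (1 - x) ^ (-p) := rpow_pos_of_pos (by linarith [hx.2]) _
  have ha5 : (0:ℝ) < x ^ p := rpow_pos_of_pos hx.1 _
  have ha6 : (0:ℝ) < (1 - x) ^ (-p - 1) := rpow_pos_of_pos (by linarith [hx.2]) _
  have t1 : p * (p - 1) * x ^ (p - 2) * (1 - x) ^ (1 - p) < 0 := by
    nlinarith [mul_pos (mul_pos hp0 h1p) (mul_pos ha1 ha2)]
  have t2 : 0 < p * (1 - p) * x ^ (p - 1) * (1 - x) ^ (-p) := by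
    nlinarith [mul_pos (mul_pos hp0 h1p) (mul_pos ha3 ha4)]
  have t3 : 0 < p * (1 - p) * (x ^ p * (1 - x) ^ (-p - 1)) := by
    nlinarith [mul_pos (mul_pos hp0 h1p) (mul_pos ha5 ha6)]
  linarith

/-- `φ(ε) = (n−1)^{−1/2}·ε^{1/2}·(1−ε)^{1/2}
      + (n−1)^{1/(2(n−1))}·(1−ε)^{1/(2(n−1))}·ε^{1−1/(2(n−1))}` (real powers). -/
def phi (n : ℕ) (ε : ℝ) : ℝ :=
  ((n : ℝ) - 1) ^ (-(1 / 2) : ℝ) * ε ^ ((1 : ℝ) / 2) * (1 - ε) ^ ((1 : ℝ) / 2) +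
    ((n : ℝ) - 1) ^ (1 / (2 * ((n : ℝ) - 1))) * (1 - ε) ^ (1 / (2 * ((n : ℝ) - 1))) *
      ε ^ (1 - 1 / (2 * ((n : ℝ) - 1)))

/-- `φ` is strictly concave on `[0,1]`. -/
theorem stmt7 (n : ℕ) (hn : 2 ≤ n) : StrictConcaveOn ℝ (Set.Icc (0 : ℝ) 1) (phi n) := by
  have hn2 : (2:ℝ) ≤ (n:ℝ) := by exact_mod_cast hn
  set a : ℝ := 1 / (2 * ((n : ℝ) - 1)) with ha_def
  have hden : (0:ℝ) < 2 * ((n:ℝ) - 1) := by linarith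
  have ha0 : 0 < a := by rw [ha_def]; positivity
  have ha2 : a ≤ 1/2 := by
    rw [ha_def, div_le_div_iff₀ hden (by norm_num)]
    linarith
  have hc1 : 0 < ((n:ℝ) - 1) ^ (-(1/2) : ℝ) := rpow_pos_of_pos (by linarith) _
  have hc2 : 0 < ((n:ℝ) - 1) ^ a := rpow_pos_of_pos (by linarith) _
  have h1 := const_mul_strictConcave
    (psi_strictConcave (p := (1:ℝ)/2) (by norm_num) (by norm_num)) hc1
  have h2 := const_mul_strictConcave
    (psi_strictConcave (p := 1 - a) (by linarith) (by linarith)) hc2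
  have heq : phi n = fun ε : ℝ =>
      (fun ε : ℝ => ((n:ℝ) - 1) ^ (-(1/2) : ℝ) * (ε ^ ((1:ℝ)/2) * (1 - ε) ^ (1 - (1:ℝ)/2))) ε
      + (fun ε : ℝ => ((n:ℝ) - 1) ^ a * (ε ^ (1 - a) * (1 - ε) ^ (1 - (1 - a)))) ε := by
    funext ε
    have e1 : (1:ℝ) - 1/2 = 1/2 := by norm_num
    have e2 : (1:ℝ) - (1 - a) = a := by ring
    simp only [phi, ← ha_def, e1, e2]
    ring
  rw [heq]
  exact h1.add h2

end
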